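/- (Deformation retraction onto a relative cone.) Let δ : ℝ^m → ℝ be a continuously differentiable function whose negative gradient flow is globally defined. Fix real numbers t₀ < t₁, set J = [t₀, t₁], and let a, b : ℝ → ℝ be continuous on J and satisfy: b(t) = b₀ := b(t₀) for all t ∈ J; a is strictly increasing on J with a(t₁) = b₀; and there exist ε > 0 and ρ > 0 such that ‖∇δ(v)‖ ≥ ρ for every v with δ(v) ∈ [a(t₀) − ε, a(t₀) + ε] (a strengthened form of the hypothesis that a(t₀) has a neighborhood of regular values of δ). Then (B_J, A_J) deformation retracts onto the relative cone on (δ^{b₀}, δ^{a(t₀)}), namely onto the pair (J × {v : δ(v) ≤ b₀}, (J × {v : δ(v) ≤ a(t₀)}) ∪ ({t₁} × {v : δ(v) ≤ b₀})): there is a continuous map H : [0,1] × B_J → B_J with H(0,p) = p for all p, H(s, A_J) ⊆ A_J for all s, H(s,p) = p whenever p ∈ J × {v : δ(v) ≤ a(t₀)}, and H(1, A_J) ⊆ (J × {v : δ(v) ≤ a(t₀)}) ∪ ({t₁} × {v : δ(v) ≤ b₀}). (Note that here B_J = J × {v : δ(v) ≤ b₀}.) -/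

import Mathlib

open Set

lemma aux_deriv (m : ℕ) (δ : EuclideanSpace ℝ (Fin m) → ℝ) (hδ : ContDiff ℝ 1 δ)
    (φ : ℝ × EuclideanSpace ℝ (Fin m) → EuclideanSpace ℝ (Fin m))
    (hφ' : ∀ (v : EuclideanSpace ℝ (Fin m)) (s : ℝ),
      HasDerivAt (fun τ => φ (τ, v)) (-gradient δ (φ (s, v))) s)
    (v : EuclideanSpace ℝ (Fin m)) (s : ℝ) :
    HasDerivAt (fun u => δ (φ (u, v))) (-‖gradient δ (φ (s, v))‖^2) s := by
  have h1 : HasGradientAt δ (gradient δ (φ (s, v))) (φ (s, v)) :=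
    (hδ.differentiable one_ne_zero _).hasGradientAt
  have h2 := h1.hasFDerivAt.comp_hasDerivAt s (hφ' v s)
  rw [InnerProductSpace.toDual_apply_apply, inner_neg_right, real_inner_self_eq_norm_sq] at h2
  exact h2

lemma aux_anti (m : ℕ) (δ : EuclideanSpace ℝ (Fin m) → ℝ) (hδ : ContDiff ℝ 1 δ)
    (φ : ℝ × EuclideanSpace ℝ (Fin m) → EuclideanSpace ℝ (Fin m))
    (hφ' : ∀ (v : EuclideanSpace ℝ (Fin m)) (s : ℝ),
      HasDerivAt (fun τ => φ (τ, v)) (-gradient δ (φ (s, v))) s)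
    (v : EuclideanSpace ℝ (Fin m)) :
    Antitone (fun u => δ (φ (u, v))) := by
  apply antitone_of_deriv_nonpos
  · exact fun s => (aux_deriv m δ hδ φ hφ' v s).differentiableAt
  · intro s
    rw [(aux_deriv m δ hδ φ hφ' v s).deriv]
    simp [neg_nonpos]

lemma aux_flow (m : ℕ) (δ : EuclideanSpace ℝ (Fin m) → ℝ) (hδ : ContDiff ℝ 1 δ)
    (φ : ℝ × EuclideanSpace ℝ (Fin m) → EuclideanSpace ℝ (Fin m))
    (hφ0 : ∀ v, φ (0, v) = v)
    (hφ' : ∀ (v : EuclideanSpace ℝ (Fin m)) (s : ℝ),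
      HasDerivAt (fun τ => φ (τ, v)) (-gradient δ (φ (s, v))) s)
    (c ε ρ : ℝ) (hε : 0 < ε) (hρ : 0 < ρ)
    (hband : ∀ v : EuclideanSpace ℝ (Fin m),
      δ v ∈ Set.Icc (c - ε) (c + ε) → ρ ≤ ‖gradient δ v‖)
    (x : EuclideanSpace ℝ (Fin m)) (hx : δ x ≤ c + ε) :
    δ (φ (max 0 (min (δ x - c) ε) / ρ^2, x)) ≤ c := by
  set g : ℝ → ℝ := fun u => δ (φ (u, x)) with hg
  have hanti : Antitone g := aux_anti m δ hδ φ hφ' x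
  have hg0 : g 0 = δ x := by simp [hg, hφ0]
  rcases le_or_gt (δ x) c with hle | hlt
  · have : max 0 (min (δ x - c) ε) = 0 := by
      rw [max_eq_left]
      exact min_le_of_left_le (by linarith)
    rw [this]
    simpa [hφ0] using hle
  · have hmin : min (δ x - c) ε = δ x - c := min_eq_left (by linarith)
    have hmax : max 0 (min (δ x - c) ε) = δ x - c := by rw [hmin, max_eq_right (by linarith)]
    rw [hmax]
    set T : ℝ := (δ x - c) / ρ^2 with hT
    have hx0 : (0:ℝ) < δ x - c := by linarith
    have hTpos : 0 < T := by rw [hT]; positivity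
    by_contra hcon
    push_neg at hcon
    -- on [0, T], g stays in the band (c, δ x]
    have hub : ∀ u ∈ Set.Icc (0:ℝ) T, c < g u ∧ g u ≤ c + ε := by
      intro u hu
      constructor
      · exact lt_of_lt_of_le hcon (hanti hu.2)
      · calc g u ≤ g 0 := hanti hu.1
          _ ≤ c + ε := by rw [hg0]; exact hx
    -- h := g + ρ² u is antitone on [0, T]
    have hderiv : ∀ u, HasDerivAt (fun u => g u + ρ^2 * u)
        (-‖gradient δ (φ (u, x))‖^2 + ρ^2) u := by
      intro u
      have h := (aux_deriv m δ hδ φ hφ' x u).add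
        ((hasDerivAt_id u).const_mul (ρ^2))
      rw [mul_one] at h
      exact h
    have hmono : AntitoneOn (fun u => g u + ρ^2 * u) (Set.Icc 0 T) := by
      apply antitoneOn_of_deriv_nonpos (convex_Icc 0 T)
      · exact (continuous_iff_continuousAt.2 fun u => (hderiv u).continuousAt).continuousOn
      · exact fun u _ => (hderiv u).differentiableAt.differentiableWithinAt
      · intro u hu
        rw [interior_Icc] at hu
        rw [(hderiv u).deriv]
        have hband' := hband (φ (u, x)) ⟨by
          have := (hub u ⟨hu.1.le, hu.2.le⟩).1; simp only [hg] at this; linarith,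
          (hub u ⟨hu.1.le, hu.2.le⟩).2⟩
        nlinarith [norm_nonneg (gradient δ (φ (u, x)))]
    have := hmono (Set.left_mem_Icc.2 hTpos.le) (Set.right_mem_Icc.2 hTpos.le) hTpos.le
    have hρ2 : ρ^2 * T = δ x - c := by
      rw [hT]; field_simp
    simp only at this
    rw [hg0, mul_zero, add_zero, hρ2] at this
    have : g T ≤ c := by linarith
    exact absurd hcon (not_lt.2 this)

/-- Deformation retraction of `(B_J, A_J)` onto the relative cone
`(J × δ^{b₀}, (J × δ^{a(t₀)}) ∪ ({t₁} × δ^{b₀}))` when `b` is constant on `J`, `a` is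
strictly increasing with `a(t₁) = b₀`, and `a(t₀)` has a neighborhood of regular
values of `δ` (gradient bounded away from zero there). -/
theorem stmt_7 (m : ℕ) (δ : EuclideanSpace ℝ (Fin m) → ℝ) (hδ : ContDiff ℝ 1 δ)
    (φ : ℝ × EuclideanSpace ℝ (Fin m) → EuclideanSpace ℝ (Fin m))
    (hφc : Continuous φ) (hφ0 : ∀ v, φ (0, v) = v)
    (hφ' : ∀ (v : EuclideanSpace ℝ (Fin m)) (s : ℝ),
      HasDerivAt (fun τ => φ (τ, v)) (-gradient δ (φ (s, v))) s)
    (t₀ t₁ : ℝ) (ht : t₀ < t₁)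
    (a b : ℝ → ℝ)
    (ha : ContinuousOn a (Set.Icc t₀ t₁)) (hb : ContinuousOn b (Set.Icc t₀ t₁))
    (hbconst : ∀ t ∈ Set.Icc t₀ t₁, b t = b t₀)
    (hamono : StrictMonoOn a (Set.Icc t₀ t₁)) (ha1 : a t₁ = b t₀)
    (hreg : ∃ ε > (0:ℝ), ∃ ρ > (0:ℝ), ∀ v : EuclideanSpace ℝ (Fin m),
      δ v ∈ Set.Icc (a t₀ - ε) (a t₀ + ε) → ρ ≤ ‖gradient δ v‖) :
    let AJ : Set (ℝ × EuclideanSpace ℝ (Fin m)) :=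
      {p | p.1 ∈ Set.Icc t₀ t₁ ∧ δ p.2 ≤ a p.1}
    let BJ : Set (ℝ × EuclideanSpace ℝ (Fin m)) :=
      {p | p.1 ∈ Set.Icc t₀ t₁ ∧ δ p.2 ≤ b p.1}
    let cone : Set (ℝ × EuclideanSpace ℝ (Fin m)) :=
      (Set.Icc t₀ t₁ ×ˢ {v | δ v ≤ a t₀}) ∪ ({t₁} ×ˢ {v | δ v ≤ b t₀})
    ∃ H : ℝ × (ℝ × EuclideanSpace ℝ (Fin m)) → ℝ × EuclideanSpace ℝ (Fin m),
      ContinuousOn H (Set.Icc (0:ℝ) 1 ×ˢ BJ) ∧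
      (∀ s ∈ Set.Icc (0:ℝ) 1, ∀ p ∈ BJ, H (s, p) ∈ BJ) ∧
      (∀ p ∈ BJ, H (0, p) = p) ∧
      (∀ s ∈ Set.Icc (0:ℝ) 1, ∀ p ∈ AJ, H (s, p) ∈ AJ) ∧
      (∀ s ∈ Set.Icc (0:ℝ) 1, ∀ p ∈ Set.Icc t₀ t₁ ×ˢ {v | δ v ≤ a t₀}, H (s, p) = p) ∧
      (∀ p ∈ AJ, H (1, p) ∈ cone) := by
  intro AJ BJ cone
  obtain ⟨ε, hε, ρ, hρ, hband⟩ := hreg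
  set c : ℝ := a t₀ with hc
  set θ : ℝ → ℝ := fun d => min 1 (max 0 ((d - c) / ε)) with hθdef
  have hθc : Continuous θ := by
    apply continuous_const.min
    apply continuous_const.max
    fun_prop
  have hθ0 : ∀ d, 0 ≤ θ d := fun d => le_min zero_le_one (le_max_left _ _)
  have hθ1 : ∀ d, θ d ≤ 1 := fun d => min_le_left _ _
  have hθz : ∀ d, d ≤ c → θ d = 0 := by
    intro d hd
    have : max 0 ((d - c) / ε) = 0 := max_eq_left (div_nonpos_of_nonpos_of_nonneg (by linarith) hε.le)
    simp [hθdef, this]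
  have hθone : ∀ d, c + ε ≤ d → θ d = 1 := by
    intro d hd
    have h1 : (1:ℝ) ≤ (d - c) / ε := (le_div_iff₀ hε).2 (by linarith)
    simp [hθdef, min_eq_left, le_max_of_le_right h1]
  have hθmul : ∀ d, θ d * (ε / ρ^2) = max 0 (min (d - c) ε) / ρ^2 := by
    intro d
    have key : θ d * ε = max 0 (min (d - c) ε) := by
      rcases le_total d c with h | h
      · rw [hθz d h, zero_mul, eq_comm, max_eq_left (min_le_of_left_le (by linarith))]
      · rcases le_total d (c + ε) with h2 | h2
        · have hnn : (0:ℝ) ≤ (d - c) / ε := div_nonneg (by linarith) hε.le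
          have hle1 : (d - c) / ε ≤ 1 := (div_le_one hε).2 (by linarith)
          have hθd : θ d = (d - c) / ε := by
            rw [hθdef]; dsimp only; rw [max_eq_right hnn, min_eq_right hle1]
          rw [hθd, div_mul_cancel₀ _ hε.ne',
            min_eq_left (by linarith), max_eq_right (by linarith)]
        · rw [hθone d h2, one_mul, min_eq_right (by linarith),
            max_eq_right hε.le]
    rw [← key]; ring
  have hanti : ∀ x : EuclideanSpace ℝ (Fin m), Antitone (fun u => δ (φ (u, x))) :=
    aux_anti m δ hδ φ hφ'
  have hflowle : ∀ (x : EuclideanSpace ℝ (Fin m)) (u : ℝ), 0 ≤ u → δ (φ (u, x)) ≤ δ x := by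
    intro x u hu
    have := hanti x hu
    simpa [hφ0] using this
  have hamono' := hamono.monotoneOn
  refine ⟨fun q => (q.2.1 + q.1 * θ (δ q.2.2) * (t₁ - q.2.1),
      φ (q.1 * θ (δ q.2.2) * (ε / ρ^2), q.2.2)), ?_, ?_, ?_, ?_, ?_, ?_⟩
  · apply Continuous.continuousOn
    have hδc : Continuous δ := hδ.continuous
    have hθδ : Continuous fun q : ℝ × (ℝ × EuclideanSpace ℝ (Fin m)) => θ (δ q.2.2) :=
      hθc.comp (hδc.comp (continuous_snd.snd))
    apply Continuous.prodMk
    · exact continuous_snd.fst.add ((continuous_fst.mul hθδ).mul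
        (continuous_const.sub continuous_snd.fst))
    · exact hφc.comp (((continuous_fst.mul hθδ).mul continuous_const).prodMk
        continuous_snd.snd)
  · rintro s hs ⟨t, x⟩ ⟨htJ, hbx⟩
    have hσ0 : 0 ≤ s * θ (δ x) := mul_nonneg hs.1 (hθ0 _)
    have hσ1 : s * θ (δ x) ≤ 1 := mul_le_one₀ hs.2 (hθ0 _) (hθ1 _)
    constructor
    · constructor
      · simp only; nlinarith [htJ.1, htJ.2]
      · simp only; nlinarith [htJ.1, htJ.2]
    · have h1 : δ (φ (s * θ (δ x) * (ε / ρ^2), x)) ≤ δ x :=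
        hflowle x _ (mul_nonneg hσ0 (by positivity))
      have ht' : t + s * θ (δ x) * (t₁ - t) ∈ Set.Icc t₀ t₁ := by
        constructor <;> nlinarith [htJ.1, htJ.2]
      calc δ (φ (s * θ (δ x) * (ε / ρ^2), x)) ≤ δ x := h1
        _ ≤ b t := hbx
        _ = b t₀ := hbconst t htJ
        _ = b (t + s * θ (δ x) * (t₁ - t)) := (hbconst _ ht').symm
  · rintro ⟨t, x⟩ _
    simp [hφ0]
  · rintro s hs ⟨t, x⟩ ⟨htJ, hax⟩
    have hσ0 : 0 ≤ s * θ (δ x) := mul_nonneg hs.1 (hθ0 _)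
    have hσ1 : s * θ (δ x) ≤ 1 := mul_le_one₀ hs.2 (hθ0 _) (hθ1 _)
    have ht' : t + s * θ (δ x) * (t₁ - t) ∈ Set.Icc t₀ t₁ := by
      constructor <;> nlinarith [htJ.1, htJ.2]
    refine ⟨ht', ?_⟩
    have h1 : δ (φ (s * θ (δ x) * (ε / ρ^2), x)) ≤ δ x :=
      hflowle x _ (mul_nonneg hσ0 (by positivity))
    have hle : t ≤ t + s * θ (δ x) * (t₁ - t) := by nlinarith [htJ.2]
    calc δ (φ (s * θ (δ x) * (ε / ρ^2), x)) ≤ δ x := h1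
      _ ≤ a t := hax
      _ ≤ a (t + s * θ (δ x) * (t₁ - t)) := hamono' htJ ht' hle
  · rintro s hs ⟨t, x⟩ ⟨htJ, hax⟩
    simp only [Set.mem_setOf_eq] at hax
    have h0 : θ (δ x) = 0 := hθz (δ x) hax
    simp [h0, hφ0]
  · rintro ⟨t, x⟩ ⟨htJ, hax⟩
    have hbx : δ x ≤ b t₀ := by
      rw [← ha1]
      exact le_trans hax (hamono' htJ (Set.right_mem_Icc.2 ht.le) htJ.2)
    rcases le_or_gt (δ x) (c + ε) with hcase | hcase
    · left
      have ht' : t + 1 * θ (δ x) * (t₁ - t) ∈ Set.Icc t₀ t₁ := by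
        have := hθ0 (δ x); have := hθ1 (δ x)
        constructor <;> nlinarith [htJ.1, htJ.2]
      refine ⟨ht', ?_⟩
      have heq : (1:ℝ) * θ (δ x) * (ε / ρ^2) = max 0 (min (δ x - c) ε) / ρ^2 := by
        rw [one_mul, hθmul]
      show δ (φ ((1:ℝ) * θ (δ x) * (ε / ρ^2), x)) ≤ a t₀
      rw [heq]
      exact aux_flow m δ hδ φ hφ0 hφ' c ε ρ hε hρ hband x hcase
    · right
      have hθ1' : θ (δ x) = 1 := hθone _ hcase.le
      constructor
      · simp [hθ1']
      · exact le_trans (hflowle x _ (by positivity)) hbx
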